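/- Suppose there exists q ∈ (0,1) such that σ₀ ≤ q/(q+1) and M r₀/μ ≤ (q(1−q)/8)·(q/(1+q) − σ₀). Then for all k ≥ 0, σ_k² ≤ σ₀² + ((1+q)/(1−q))·(M r₀/μ + M²r₀²/μ²) ≤ (q/(q+1))², and r_{k+1} ≤ q r_k. -/

import Mathlib

open Matrix MeasureTheory

noncomputable def specNorm {n : ℕ} (A : Matrix (Fin n) (Fin n) ℝ) : ℝ :=
  ‖Matrix.toEuclideanCLM (𝕜 := ℝ) A‖

noncomputable def frobNorm {n : ℕ} (A : Matrix (Fin n) (Fin n) ℝ) : ℝ :=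
  Real.sqrt (∑ i, ∑ j, (A i j) ^ 2)

noncomputable def vnorm {n : ℕ} (x : Fin n → ℝ) : ℝ :=
  Real.sqrt (∑ i, (x i) ^ 2)

noncomputable def intJac {n : ℕ} (J : (Fin n → ℝ) → Matrix (Fin n) (Fin n) ℝ)
    (x u : Fin n → ℝ) : Matrix (Fin n) (Fin n) ℝ :=
  Matrix.of fun i j => ∫ t in (0:ℝ)..(1:ℝ), J (x + t • u) i j

section Helpers

variable {n : ℕ}

lemma vnorm_eq (v : Fin n → ℝ) :
    vnorm v = ‖(WithLp.equiv 2 (Fin n → ℝ)).symm v‖ := by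
  rw [EuclideanSpace.norm_eq]
  simp [vnorm, Real.norm_eq_abs, sq_abs]

lemma vnorm_nonneg (v : Fin n → ℝ) : 0 ≤ vnorm v := Real.sqrt_nonneg _

lemma vnorm_zero : vnorm (0 : Fin n → ℝ) = 0 := by simp [vnorm]

lemma vnorm_pos {v : Fin n → ℝ} (hv : v ≠ 0) : 0 < vnorm v := by
  rw [vnorm_eq]
  rw [norm_pos_iff]
  intro h
  exact hv ((WithLp.equiv 2 (Fin n → ℝ)).symm.injective (by simpa using h))

lemma vnorm_sq (v : Fin n → ℝ) : vnorm v ^ 2 = ∑ i, (v i) ^ 2 := by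
  rw [vnorm, Real.sq_sqrt]; positivity

lemma vnorm_dot (v : Fin n → ℝ) : v ⬝ᵥ v = vnorm v ^ 2 := by
  rw [vnorm_sq, dotProduct]; simp [sq]

lemma Matrix.toEuclideanCLM_piLp_equiv_symm (A : Matrix (Fin n) (Fin n) ℝ) (v : Fin n → ℝ) :
    Matrix.toEuclideanCLM (𝕜 := ℝ) A ((WithLp.equiv 2 (Fin n → ℝ)).symm v)
      = (WithLp.equiv 2 (Fin n → ℝ)).symm (Matrix.toLin' A v) := rfl

lemma vnorm_sub_sub_le (p w s : Fin n → ℝ) :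
    vnorm (p - w - s) ≤ vnorm p + vnorm w + vnorm s := by
  rw [vnorm_eq, vnorm_eq, vnorm_eq, vnorm_eq]
  have h : (WithLp.equiv 2 (Fin n → ℝ)).symm (p - w - s)
      = (WithLp.equiv 2 (Fin n → ℝ)).symm p - (WithLp.equiv 2 (Fin n → ℝ)).symm w
        - (WithLp.equiv 2 (Fin n → ℝ)).symm s := by
    ext i; simp
  rw [h]
  calc ‖_ - _ - _‖ ≤ ‖_ - _‖ + ‖_‖ := norm_sub_le _ _
  _ ≤ ‖_‖ + ‖_‖ + ‖_‖ := by gcongr; exact norm_sub_le _ _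

lemma specNorm_nonneg (A : Matrix (Fin n) (Fin n) ℝ) : 0 ≤ specNorm A :=
  norm_nonneg _

lemma frobNorm_nonneg (A : Matrix (Fin n) (Fin n) ℝ) : 0 ≤ frobNorm A :=
  Real.sqrt_nonneg _

lemma vnorm_mulVec_le (A : Matrix (Fin n) (Fin n) ℝ) (v : Fin n → ℝ) :
    vnorm (A *ᵥ v) ≤ specNorm A * vnorm v := by
  rw [vnorm_eq, vnorm_eq, ← Matrix.toLin'_apply, ← Matrix.toEuclideanCLM_piLp_equiv_symm]
  exact (Matrix.toEuclideanCLM (𝕜 := ℝ) A).le_opNorm _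

lemma specNorm_mul_le (A B : Matrix (Fin n) (Fin n) ℝ) :
    specNorm (A * B) ≤ specNorm A * specNorm B := by
  rw [specNorm, specNorm, specNorm, _root_.map_mul]
  exact norm_mul_le _ _

lemma frobNorm_sq (A : Matrix (Fin n) (Fin n) ℝ) :
    frobNorm A ^ 2 = ∑ i, ∑ j, (A i j) ^ 2 := by
  rw [frobNorm, Real.sq_sqrt]; positivity

lemma frobNorm_vecMulVec (a b : Fin n → ℝ) :
    frobNorm (vecMulVec a b) = vnorm a * vnorm b := by
  rw [frobNorm, vnorm, vnorm, ← Real.sqrt_mul (by positivity)]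
  congr 1
  rw [Finset.sum_mul]
  refine Finset.sum_congr rfl fun i _ => ?_
  rw [Finset.mul_sum]
  refine Finset.sum_congr rfl fun j _ => ?_
  simp [vecMulVec_apply]; ring

lemma frobNorm_smul (c : ℝ) (A : Matrix (Fin n) (Fin n) ℝ) :
    frobNorm (c • A) = |c| * frobNorm A := by
  rw [frobNorm, frobNorm, ← Real.sqrt_sq_eq_abs, ← Real.sqrt_mul (by positivity)]
  congr 1
  rw [Finset.mul_sum]
  refine Finset.sum_congr rfl fun i _ => ?_
  rw [Finset.mul_sum]
  refine Finset.sum_congr rfl fun j _ => ?_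
  simp [Matrix.smul_apply]; ring

lemma vnorm_mulVec_le_frob (A : Matrix (Fin n) (Fin n) ℝ) (v : Fin n → ℝ) :
    vnorm (A *ᵥ v) ≤ frobNorm A * vnorm v := by
  have h1 : vnorm (A *ᵥ v) ^ 2 ≤ (frobNorm A * vnorm v) ^ 2 := by
    rw [vnorm_sq, mul_pow, frobNorm_sq, vnorm_sq, Finset.sum_mul]
    refine Finset.sum_le_sum fun i _ => ?_
    simpa [mulVec, dotProduct] using
      Finset.sum_mul_sq_le_sq_mul_sq Finset.univ (fun j => A i j) (fun j => v j)
  exact le_of_pow_le_pow_left₀ two_ne_zero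
    (mul_nonneg (Real.sqrt_nonneg _) (Real.sqrt_nonneg _)) h1

lemma frobNorm_eq (A : Matrix (Fin n) (Fin n) ℝ) :
    frobNorm A = ‖((WithLp.equiv 2 (Fin n × Fin n → ℝ)).symm fun p => A p.1 p.2)‖ := by
  rw [EuclideanSpace.norm_eq]
  simp [frobNorm, Real.norm_eq_abs, sq_abs, Fintype.sum_prod_type]

lemma frobNorm_add_le (X Y : Matrix (Fin n) (Fin n) ℝ) :
    frobNorm (X + Y) ≤ frobNorm X + frobNorm Y := by
  rw [frobNorm_eq, frobNorm_eq, frobNorm_eq]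
  have h : ((WithLp.equiv 2 (Fin n × Fin n → ℝ)).symm fun p => (X + Y) p.1 p.2)
      = ((WithLp.equiv 2 (Fin n × Fin n → ℝ)).symm fun p => X p.1 p.2)
        + ((WithLp.equiv 2 (Fin n × Fin n → ℝ)).symm fun p => Y p.1 p.2) := by
    ext p; simp
  rw [h]; exact norm_add_le _ _

lemma dot_self_pos {u : Fin n → ℝ} (hu : u ≠ 0) : (0:ℝ) < u ⬝ᵥ u := by
  have h0 : u ⬝ᵥ u ≠ 0 := fun h => hu (dotProduct_self_eq_zero.mp h)
  have h1 : (0:ℝ) ≤ u ⬝ᵥ u := by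
    simp only [dotProduct]
    exact Finset.sum_nonneg fun i _ => mul_self_nonneg _
  exact lt_of_le_of_ne h1 (Ne.symm h0)

lemma frob_proj_le (X : Matrix (Fin n) (Fin n) ℝ) (u : Fin n → ℝ) (hu : u ≠ 0) :
    frobNorm (X - (u ⬝ᵥ u)⁻¹ • vecMulVec (X *ᵥ u) u) ≤ frobNorm X := by
  have hd : (0:ℝ) < u ⬝ᵥ u := dot_self_pos hu
  apply Real.sqrt_le_sqrt
  refine Finset.sum_le_sum fun i _ => ?_
  have expand : ∑ j, ((X - (u ⬝ᵥ u)⁻¹ • vecMulVec (X *ᵥ u) u) i j) ^ 2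
      = ∑ j, (X i j) ^ 2 - ((X *ᵥ u) i) ^ 2 / (u ⬝ᵥ u) := by
    have h1 : ∀ j, ((X - (u ⬝ᵥ u)⁻¹ • vecMulVec (X *ᵥ u) u) i j) ^ 2
        = (X i j) ^ 2 - 2 * (u ⬝ᵥ u)⁻¹ * (X *ᵥ u) i * (X i j * u j)
          + ((u ⬝ᵥ u)⁻¹ * (X *ᵥ u) i) ^ 2 * (u j) ^ 2 := by
      intro j; simp [Matrix.sub_apply, Matrix.smul_apply, vecMulVec_apply]; ring
    rw [Finset.sum_congr rfl fun j _ => h1 j]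
    rw [Finset.sum_add_distrib, Finset.sum_sub_distrib, ← Finset.mul_sum, ← Finset.mul_sum]
    have h2 : ∑ j, X i j * u j = (X *ᵥ u) i := by simp [mulVec, dotProduct]
    have h3 : ∑ j, (u j) ^ 2 = u ⬝ᵥ u := by simp [dotProduct, sq]
    rw [h2, h3]
    field_simp
    ring
  rw [expand]
  have : (0:ℝ) ≤ ((X *ᵥ u) i) ^ 2 / (u ⬝ᵥ u) := by positivity
  linarith

lemma mul_vecMulVec (A : Matrix (Fin n) (Fin n) ℝ) (v u : Fin n → ℝ) :
    A * vecMulVec v u = vecMulVec (A *ᵥ v) u := by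
  ext i j
  simp only [Matrix.mul_apply, vecMulVec_apply, mulVec, dotProduct, Finset.sum_mul]
  exact Finset.sum_congr rfl fun l _ => by ring

lemma vecMulVec_sub (a b u : Fin n → ℝ) :
    vecMulVec (a - b) u = vecMulVec a u - vecMulVec b u := by
  ext i j
  simp [vecMulVec_apply]
  ring

end Helpers

lemma broyden_mvt {n : ℕ} (F : (Fin n → ℝ) → (Fin n → ℝ))
    (J : (Fin n → ℝ) → Matrix (Fin n) (Fin n) ℝ)
    (hF : ∀ z, HasFDerivAt F (LinearMap.toContinuousLinearMap ((J z).mulVecLin)) z)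
    (xs : Fin n → ℝ) (M : ℝ) (hM : 0 ≤ M)
    (hLip : ∀ z, specNorm (J z - J xs) ≤ M * vnorm (z - xs)) (a b : Fin n → ℝ) :
    vnorm (F b - F a - (J xs) *ᵥ (b - a)) ≤
      M * max (vnorm (a - xs)) (vnorm (b - xs)) * vnorm (b - a) := by
  classical
  set E := EuclideanSpace ℝ (Fin n)
  let e : E ≃L[ℝ] (Fin n → ℝ) := EuclideanSpace.equiv (Fin n) ℝ
  have he : ∀ v : Fin n → ℝ, e.symm v = (WithLp.equiv 2 (Fin n → ℝ)).symm v := fun v => rfl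
  let G : E → E := fun y => e.symm (F (e y)) - Matrix.toEuclideanCLM (𝕜 := ℝ) (J xs) y
  have key : ∀ (A : Matrix (Fin n) (Fin n) ℝ) (y : E),
      Matrix.toEuclideanCLM (𝕜 := ℝ) A y = e.symm (A *ᵥ (e y)) := by
    intro A y
    have h0 : y = (WithLp.equiv 2 (Fin n → ℝ)).symm (e y) := rfl
    rw [h0, Matrix.toEuclideanCLM_piLp_equiv_symm, he, Matrix.toLin'_apply]
    rfl
  have hG : ∀ y : E, HasFDerivAt G (Matrix.toEuclideanCLM (𝕜 := ℝ) (J (e y) - J xs)) y := by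
    intro y
    have h1 : HasFDerivAt (fun w : E => e.symm (F (e w)))
        (((e.symm : (Fin n → ℝ) →L[ℝ] E).comp
          (LinearMap.toContinuousLinearMap ((J (e y)).mulVecLin))).comp
          (e : E →L[ℝ] (Fin n → ℝ))) y := by
      have ha : HasFDerivAt (fun w : E => F (e w))
          ((LinearMap.toContinuousLinearMap ((J (e y)).mulVecLin)).comp
            (e : E →L[ℝ] (Fin n → ℝ))) y := (hF (e y)).comp y e.hasFDerivAt
      exact ((e.symm : (Fin n → ℝ) →L[ℝ] E).hasFDerivAt).comp y ha
    have h2 : HasFDerivAt (fun y : E => Matrix.toEuclideanCLM (𝕜 := ℝ) (J xs) y)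
        (Matrix.toEuclideanCLM (𝕜 := ℝ) (J xs)) y :=
      (Matrix.toEuclideanCLM (𝕜 := ℝ) (J xs)).hasFDerivAt
    have h3 := h1.sub h2
    refine HasFDerivAt.congr_fderiv h3 ?_
    symm
    rw [map_sub]
    ext z
    simp only [ContinuousLinearMap.coe_sub', Pi.sub_apply, ContinuousLinearMap.coe_comp',
      Function.comp_apply, ContinuousLinearEquiv.coe_coe, LinearMap.coe_toContinuousLinearMap',
      Matrix.mulVecLin_apply]
    rw [key, key]
  set a' : E := e.symm a
  set b' : E := e.symm b
  set R : ℝ := max (vnorm (a - xs)) (vnorm (b - xs))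
  set s : Set E := segment ℝ a' b'
  have hsub : s ⊆ Metric.closedBall (e.symm xs) R := by
    apply (convex_closedBall _ _).segment_subset
    · simp only [Metric.mem_closedBall, dist_eq_norm]
      rw [← map_sub e.symm, he, ← vnorm_eq]
      exact le_max_left _ _
    · simp only [Metric.mem_closedBall, dist_eq_norm]
      rw [← map_sub e.symm, he, ← vnorm_eq]
      exact le_max_right _ _
  have hbound : ∀ y ∈ s, ‖Matrix.toEuclideanCLM (𝕜 := ℝ) (J (e y) - J xs)‖ ≤ M * R := by
    intro y hy
    have h1 : specNorm (J (e y) - J xs) ≤ M * vnorm (e y - xs) := hLip (e y)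
    have h2 : vnorm (e y - xs) ≤ R := by
      have hmem := hsub hy
      rw [Metric.mem_closedBall, dist_eq_norm] at hmem
      rw [vnorm_eq]
      have h4 : (WithLp.equiv 2 (Fin n → ℝ)).symm (e y - xs) = y - e.symm xs := by
        rw [← he, map_sub, e.symm_apply_apply]
      rw [h4]
      exact hmem
    calc ‖Matrix.toEuclideanCLM (𝕜 := ℝ) (J (e y) - J xs)‖ = specNorm (J (e y) - J xs) := rfl
    _ ≤ M * vnorm (e y - xs) := h1
    _ ≤ M * R := mul_le_mul_of_nonneg_left h2 hM
  have main := Convex.norm_image_sub_le_of_norm_hasFDerivWithin_le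
    (f := G) (f' := fun y => Matrix.toEuclideanCLM (𝕜 := ℝ) (J (e y) - J xs))
    (fun y _ => (hG y).hasFDerivWithinAt) hbound (convex_segment a' b')
    (left_mem_segment ℝ a' b') (right_mem_segment ℝ a' b')
  have hGba : G b' - G a' = e.symm (F b - F a - (J xs) *ᵥ (b - a)) := by
    have hea : e a' = a := e.apply_symm_apply a
    have heb : e b' = b := e.apply_symm_apply b
    simp only [G]
    rw [key, key, hea, heb, Matrix.mulVec_sub, map_sub, map_sub, map_sub]
    abel
  have hba : b' - a' = e.symm (b - a) := by rw [map_sub]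
  rw [hGba, hba] at main
  rw [vnorm_eq, vnorm_eq, ← he, ← he]
  exact main
set_option maxHeartbeats 1000000 in
lemma broyden_induction (q σ0 M μ r0 : ℝ) (σ r : ℕ → ℝ)
    (hq0 : 0 < q) (hq1 : q < 1) (hM : 0 ≤ M) (hμ : 0 < μ)
    (hσ00 : σ 0 = σ0) (hr00 : r 0 = r0)
    (hσnn : ∀ k, 0 ≤ σ k) (hrnn : ∀ k, 0 ≤ r k)
    (hσ0c : σ0 ≤ q / (q + 1))
    (hsmall : M * r0 / μ ≤ q * (1 - q) / 8 * (q / (1 + q) - σ0))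
    (hstep1 : ∀ k, (1 - σ k) * r (k + 1) ≤ (σ k + M * r k / μ) * r k)
    (hstep2 : ∀ k, r (k + 1) ≤ r k → σ (k + 1) ≤ σ k + M * r k / μ) :
    (∀ k, σ k ^ 2 ≤ σ0 ^ 2 + (1 + q) / (1 - q) * (M * r0 / μ + M ^ 2 * r0 ^ 2 / μ ^ 2)) ∧
      (σ0 ^ 2 + (1 + q) / (1 - q) * (M * r0 / μ + M ^ 2 * r0 ^ 2 / μ ^ 2) ≤ (q / (q + 1)) ^ 2) ∧
      (∀ k, r (k + 1) ≤ q * r k) := by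
  have hr0nn : 0 ≤ r0 := hr00 ▸ hrnn 0
  have hσ0nn : 0 ≤ σ0 := hσ00 ▸ hσnn 0
  obtain ⟨t, ht⟩ : ∃ t, t = M * r0 / μ := ⟨_, rfl⟩
  obtain ⟨c, hc⟩ : ∃ c, c = q / (q + 1) := ⟨_, rfl⟩
  obtain ⟨d, hd⟩ : ∃ d, d = c - σ0 := ⟨_, rfl⟩
  rw [← hc] at hσ0c
  have htnn : 0 ≤ t := by rw [ht]; positivity
  have ht2 : M ^ 2 * r0 ^ 2 / μ ^ 2 = t ^ 2 := by rw [ht]; ring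
  have h1q : (0:ℝ) < 1 - q := by linarith
  have h1qp : (0:ℝ) < 1 + q := by linarith
  have h1q2 : (0:ℝ) < 1 - q ^ 2 := by nlinarith only [mul_pos h1q h1qp]
  have hcpos : 0 < c := by rw [hc]; positivity
  have hcq : c * (q + 1) = q := by rw [hc]; field_simp
  have hchalf : c < 1 / 2 := by
    rw [hc, div_lt_iff₀ (by linarith)]; linarith
  have h2c : q ≤ 2 * c := by
    rw [hc]
    have h0 : 2 * (q / (q + 1)) = 2 * q / (q + 1) := by ring
    rw [h0, le_div_iff₀ (by linarith)]
    nlinarith only [mul_nonneg hq0.le h1q.le]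
  have hdnn : 0 ≤ d := by rw [hd]; linarith only [hσ0c]
  have hdc : d ≤ c := by rw [hd]; linarith only [hσ0nn]
  have htc : t ≤ q * (1 - q) / 8 * d := by
    have hqq : q / (q + 1) = q / (1 + q) := by rw [add_comm]
    rw [ht, hd, hc, hqq]; exact hsmall
  have h1mq : (0:ℝ) ≤ 1 - q * (1 - q) := by nlinarith only [sq_nonneg (1 - 2 * q)]
  have htd : t ≤ d / 8 := by
    linarith only [htc, mul_nonneg h1mq hdnn]
  have h2cd : q * d ≤ 2 * c * d := mul_le_mul_of_nonneg_right h2c hdnn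
  have hcdnn : 0 ≤ c * d := mul_nonneg hcpos.le hdnn
  -- elementary bounds
  have hA1 : t / (1 - q) ≤ q * d / 8 := by
    rw [div_le_iff₀ h1q]
    calc t ≤ q * (1 - q) / 8 * d := htc
    _ = q * d / 8 * (1 - q) := by ring
  have hA1c : q * d / 8 ≤ c * d / 4 := by linarith only [h2cd]
  have hd2 : d ^ 2 ≤ c * d := by
    nlinarith only [mul_le_mul_of_nonneg_right hdc hdnn]
  have hA2 : t ^ 2 / (1 - q ^ 2) ≤ c * d / 32 := by
    rw [div_le_iff₀ h1q2]
    have hX : (0:ℝ) ≤ q * (1 - q) / 8 * d :=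
      mul_nonneg (by positivity) hdnn
    have ht2X : t ^ 2 ≤ (q * (1 - q) / 8 * d) ^ 2 := by
      nlinarith only [mul_le_mul htc htc htnn hX]
    have h22 : (0:ℝ) ≤ 2 * (1 + q) - q ^ 2 * (1 - q) := by
      nlinarith only [hq0, mul_nonneg h1q.le h1qp.le, pow_nonneg hq0.le 3]
    have key : (q * (1 - q) / 8 * d) ^ 2 ≤ c * d / 32 * (1 - q ^ 2) := by
      nlinarith only [mul_nonneg (mul_nonneg hcdnn h1q.le) h22,
        mul_nonneg (sub_nonneg.2 hd2) (mul_nonneg (sq_nonneg q) (sq_nonneg (1 - q)))]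
    linarith only [ht2X, key]
  have hA3 : 2 * c * t / (1 + q) ≤ c * d / 4 := by
    rw [div_le_iff₀ h1qp]
    have h1 : 2 * c * t ≤ 2 * c * (q * (1 - q) / 8 * d) :=
      mul_le_mul_of_nonneg_left htc (by linarith only [hcpos])
    nlinarith only [h1, mul_nonneg hcdnn h1mq, mul_nonneg hcdnn hq0.le]
  have hA1' : (1 + q) / (1 - q) * t ≤ c * d / 2 := by
    have h0 : (1 + q) / (1 - q) * t = (1 + q) * (t / (1 - q)) := by ring
    have hX1 : 0 ≤ t / (1 - q) := div_nonneg htnn h1q.le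
    rw [h0]
    nlinarith only [hA1, mul_nonneg h1q.le hX1, h2cd]
  have hA2' : (1 + q) / (1 - q) * t ^ 2 ≤ c * d / 8 := by
    have h0 : (1 + q) / (1 - q) * t ^ 2 = (1 + q) ^ 2 * (t ^ 2 / (1 - q ^ 2)) := by
      field_simp
      ring
    have hY : 0 ≤ t ^ 2 / (1 - q ^ 2) := div_nonneg (sq_nonneg t) h1q2.le
    have h4q : (0:ℝ) ≤ 4 - (1 + q) ^ 2 := by
      nlinarith only [hq1, mul_nonneg h1q.le h1qp.le]
    rw [h0]
    nlinarith only [hA2, hY, mul_nonneg h4q hY]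
  have hc2 : c * d ≤ c ^ 2 - σ0 ^ 2 := by
    rw [hd]
    nlinarith only [mul_nonneg hσ0nn (by linarith only [hσ0c] : (0:ℝ) ≤ c - σ0)]
  -- part 2
  have hpart2 : σ0 ^ 2 + (1 + q) / (1 - q) * (t + t ^ 2) ≤ c ^ 2 := by
    have h0 : (1 + q) / (1 - q) * (t + t ^ 2)
        = (1 + q) / (1 - q) * t + (1 + q) / (1 - q) * t ^ 2 := by ring
    rw [h0]
    linarith only [hA1', hA2', hc2, hcdnn]
  -- margin
  have hmargin : 0 ≤ c - t / (1 + q) := by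
    have h1 : t / (1 + q) ≤ t := div_le_self htnn (by linarith)
    linarith only [h1, htd, hdc, hcpos, hdnn]
  have harith : σ0 ^ 2 + t / (1 - q) + t ^ 2 / (1 - q ^ 2) ≤ (c - t / (1 + q)) ^ 2 := by
    have hexp : (c - t / (1 + q)) ^ 2 = c ^ 2 - 2 * c * t / (1 + q) + (t / (1 + q)) ^ 2 := by
      field_simp
      ring
    rw [hexp]
    linarith only [hA1, hA1c, hA2, hA3, hc2, sq_nonneg (t / (1 + q)), hcdnn]
  -- induction
  obtain ⟨g, hg⟩ : ∃ g : ℕ → ℝ,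
      g = fun k => t / (1 - q) * (1 - q ^ k) + t ^ 2 / (1 - q ^ 2) * (1 - q ^ (2 * k)) :=
    ⟨_, rfl⟩
  have hgle : ∀ k, g k ≤ t / (1 - q) + t ^ 2 / (1 - q ^ 2) := by
    intro k
    have h1 : 0 ≤ q ^ k := pow_nonneg hq0.le k
    have h2 : 0 ≤ q ^ (2 * k) := pow_nonneg hq0.le _
    have h3 : 0 ≤ t / (1 - q) := div_nonneg htnn h1q.le
    have h4 : 0 ≤ t ^ 2 / (1 - q ^ 2) := div_nonneg (sq_nonneg t) h1q2.le
    simp only [hg]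
    nlinarith only [mul_nonneg h3 h1, mul_nonneg h4 h2]
  have hσlt : ∀ k, σ k ^ 2 ≤ σ0 ^ 2 + g k → σ k ≤ c - t / (1 + q) := by
    intro k hk
    have h1 : σ k ^ 2 ≤ (c - t / (1 + q)) ^ 2 := by
      calc σ k ^ 2 ≤ σ0 ^ 2 + g k := hk
      _ ≤ σ0 ^ 2 + (t / (1 - q) + t ^ 2 / (1 - q ^ 2)) := by linarith only [hgle k]
      _ ≤ (c - t / (1 + q)) ^ 2 := by linarith only [harith]
    exact le_of_pow_le_pow_left₀ two_ne_zero hmargin h1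
  have hstepq : ∀ k, σ k ^ 2 ≤ σ0 ^ 2 + g k → r k ≤ r0 → r (k + 1) ≤ q * r k := by
    intro k hσk hrk
    have hσc := hσlt k hσk
    have hMt : M * r k / μ ≤ t := by
      rw [ht]
      gcongr
    have hσq : σ k * (1 + q) ≤ c * (1 + q) - t := by
      have h := mul_le_mul_of_nonneg_right hσc h1qp.le
      rwa [sub_mul, div_mul_cancel₀ _ (ne_of_gt h1qp)] at h
    have h1 : (1 - σ k) * r (k + 1) ≤ (σ k + M * r k / μ) * r k := hstep1 k
    have h2 : σ k + M * r k / μ ≤ q * (1 - σ k) := by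
      linarith only [hσq, hMt, hcq]
    have h3 : (σ k + M * r k / μ) * r k ≤ q * (1 - σ k) * r k :=
      mul_le_mul_of_nonneg_right h2 (hrnn k)
    have h4 : (0:ℝ) < 1 - σ k := by
      linarith only [hσc, hchalf, div_nonneg htnn h1qp.le]
    have h5 : (1 - σ k) * r (k + 1) ≤ (1 - σ k) * (q * r k) := by
      linarith only [h1, h3]
    exact le_of_mul_le_mul_left h5 h4
  have main : ∀ k, (σ k ^ 2 ≤ σ0 ^ 2 + g k ∧ r k ≤ q ^ k * r0) := by
    intro k
    induction k with
    | zero =>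
      have hg0 : g 0 = 0 := by simp [hg]
      constructor
      · rw [hσ00, hg0]; linarith only []
      · simpa [hr00] using le_refl r0
    | succ k ih =>
      obtain ⟨hσk, hrk⟩ := ih
      have hqk0 : (0:ℝ) ≤ q ^ k := pow_nonneg hq0.le k
      have hqk1 : q ^ k ≤ 1 := pow_le_one₀ hq0.le hq1.le
      have hrk0 : r k ≤ r0 := by
        linarith only [hrk, mul_nonneg (by linarith only [hqk1] : (0:ℝ) ≤ 1 - q ^ k) hr0nn]
      have hstep := hstepq k hσk hrk0
      have hrk1 : r (k + 1) ≤ q ^ (k + 1) * r0 := by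
        calc r (k + 1) ≤ q * r k := hstep
        _ ≤ q * (q ^ k * r0) := mul_le_mul_of_nonneg_left hrk hq0.le
        _ = q ^ (k + 1) * r0 := by ring
      have hrdec : r (k + 1) ≤ r k := by
        linarith only [hstep, mul_nonneg h1q.le (hrnn k)]
      refine ⟨?_, hrk1⟩
      have hσc := hσlt k hσk
      have he : M * r k / μ ≤ q ^ k * t := by
        rw [ht]
        have h1 : M * r k ≤ M * (q ^ k * r0) := mul_le_mul_of_nonneg_left hrk hM
        calc M * r k / μ ≤ M * (q ^ k * r0) / μ := by gcongr
        _ = q ^ k * (M * r0 / μ) := by ring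
      have henn : (0:ℝ) ≤ M * r k / μ := div_nonneg (mul_nonneg hM (hrnn k)) hμ.le
      have hσup : σ (k + 1) ≤ σ k + M * r k / μ := hstep2 k hrdec
      have hσhalf : σ k ≤ 1 / 2 := by
        linarith only [hσc, hchalf, div_nonneg htnn h1qp.le]
      have h1 : σ (k + 1) ^ 2 ≤ (σ k + M * r k / μ) ^ 2 :=
        pow_le_pow_left₀ (hσnn (k + 1)) hσup 2
      have h2 : (σ k + M * r k / μ) ^ 2
          = σ k ^ 2 + 2 * σ k * (M * r k / μ) + (M * r k / μ) ^ 2 := by ring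
      have h3 : 2 * σ k * (M * r k / μ) ≤ M * r k / μ := by
        nlinarith only [mul_nonneg (by linarith only [hσhalf] : (0:ℝ) ≤ 1 - 2 * σ k) henn]
      have h4 : (M * r k / μ) ^ 2 ≤ (q ^ k * t) ^ 2 := pow_le_pow_left₀ henn he 2
      have hgstep : g (k + 1) = g k + q ^ k * t + (q ^ k * t) ^ 2 := by
        simp only [hg]
        have e1 : q ^ (k + 1) = q * q ^ k := by ring
        have e2 : q ^ (2 * (k + 1)) = q ^ 2 * q ^ (2 * k) := by
          have h0 : 2 * (k + 1) = 2 * k + 2 := by ring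
          rw [h0, pow_add]; ring
        have e3 : q ^ (2 * k) = (q ^ k) ^ 2 := by rw [mul_comm, pow_mul]
        rw [e1, e2, e3]
        field_simp
        ring
      rw [hgstep, h2] at *
      linarith only [h1, h3, h4, he, hσk]
  have hlast : ∀ k, r (k + 1) ≤ q * r k := by
    intro k
    obtain ⟨hσk, hrk⟩ := main k
    have hqk1 : q ^ k ≤ 1 := pow_le_one₀ hq0.le hq1.le
    have hrk0 : r k ≤ r0 := by
      linarith only [hrk, mul_nonneg (by linarith only [hqk1] : (0:ℝ) ≤ 1 - q ^ k) hr0nn]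
    exact hstepq k hσk hrk0
  rw [← ht, ht2, ← hc]
  refine ⟨fun k => ?_, hpart2, hlast⟩
  calc σ k ^ 2 ≤ σ0 ^ 2 + g k := (main k).1
  _ ≤ σ0 ^ 2 + (t / (1 - q) + t ^ 2 / (1 - q ^ 2)) := by linarith only [hgle k]
  _ ≤ σ0 ^ 2 + (1 + q) / (1 - q) * (t + t ^ 2) := by
      have h1 : t / (1 - q) ≤ (1 + q) / (1 - q) * t := by
        rw [div_mul_eq_mul_div]
        gcongr
        linarith only [mul_nonneg hq0.le htnn, htnn, hq0]
      have h2 : t ^ 2 / (1 - q ^ 2) ≤ (1 + q) / (1 - q) * t ^ 2 := by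
        rw [div_mul_eq_mul_div, div_le_div_iff₀ h1q2 h1q]
        have h2q2 : (0:ℝ) ≤ 2 * q + q ^ 2 := by positivity
        nlinarith only [mul_nonneg (mul_nonneg (sq_nonneg t) h1q.le) h2q2]
      linarith only [h1, h2]

set_option maxHeartbeats 1000000 in
/-- Local linear convergence of Broyden's "good" scheme (Lemma: base). If for some
`q ∈ (0,1)` the initial quantities satisfy `σ₀ ≤ q/(q+1)` and
`M r₀/μ ≤ (q(1−q)/8)(q/(1+q) − σ₀)`, then for all `k`,
`σ_k² ≤ σ₀² + ((1+q)/(1−q))(M r₀/μ + M² r₀²/μ²) ≤ (q/(q+1))²` and `r_{k+1} ≤ q r_k`. -/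
theorem stmt6 {n : ℕ} (F : (Fin n → ℝ) → (Fin n → ℝ))
    (J : (Fin n → ℝ) → Matrix (Fin n) (Fin n) ℝ)
    (hF : ∀ z, HasFDerivAt F (LinearMap.toContinuousLinearMap ((J z).mulVecLin)) z)
    (hJc : Continuous J)
    (xs : Fin n → ℝ) (hxs : F xs = 0) (hJs : IsUnit (J xs).det)
    (μ : ℝ) (hμ : μ = 1 / specNorm ((J xs)⁻¹))
    (M : ℝ) (hM : 0 ≤ M)
    (hLip : ∀ z, specNorm (J z - J xs) ≤ M * vnorm (z - xs))
    (x : ℕ → Fin n → ℝ) (B : ℕ → Matrix (Fin n) (Fin n) ℝ)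
    (hBk : ∀ k, IsUnit (B k).det) (hFk : ∀ k, F (x k) ≠ 0)
    (hx : ∀ k, x (k + 1) = x k - (B k)⁻¹ *ᵥ F (x k))
    (hB : ∀ k, B (k + 1) = B k + ((x (k + 1) - x k) ⬝ᵥ (x (k + 1) - x k))⁻¹ •
        vecMulVec (F (x (k + 1)) - F (x k) - B k *ᵥ (x (k + 1) - x k)) (x (k + 1) - x k))
    (q : ℝ) (hq0 : 0 < q) (hq1 : q < 1)
    (hσ0 : frobNorm ((J xs)⁻¹ * (B 0 - J xs)) ≤ q / (q + 1))
    (hr0 : M * vnorm (x 0 - xs) / μ ≤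
      q * (1 - q) / 8 * (q / (1 + q) - frobNorm ((J xs)⁻¹ * (B 0 - J xs)))) :
    (∀ k : ℕ, frobNorm ((J xs)⁻¹ * (B k - J xs)) ^ 2 ≤
        frobNorm ((J xs)⁻¹ * (B 0 - J xs)) ^ 2
          + (1 + q) / (1 - q) * (M * vnorm (x 0 - xs) / μ + M ^ 2 * vnorm (x 0 - xs) ^ 2 / μ ^ 2)) ∧
      (frobNorm ((J xs)⁻¹ * (B 0 - J xs)) ^ 2
          + (1 + q) / (1 - q) * (M * vnorm (x 0 - xs) / μ + M ^ 2 * vnorm (x 0 - xs) ^ 2 / μ ^ 2)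
        ≤ (q / (q + 1)) ^ 2) ∧
      (∀ k : ℕ, vnorm (x (k + 1) - xs) ≤ q * vnorm (x k - xs)) := by
  classical
  rcases Nat.eq_zero_or_pos n with hn0 | hn
  · exfalso
    apply hFk 0
    subst hn0
    funext i
    exact i.elim0
  haveI hne : Nonempty (Fin n) := ⟨⟨0, hn⟩⟩
  haveI : Nontrivial (EuclideanSpace ℝ (Fin n)) := by infer_instance
  have hAJ : (J xs)⁻¹ * (J xs) = 1 := Matrix.nonsing_inv_mul _ hJs
  have hone : specNorm ((J xs)⁻¹ * J xs) = 1 := by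
    rw [hAJ, specNorm, _root_.map_one]
    exact norm_one
  have hApos : 0 < specNorm ((J xs)⁻¹) := by
    by_contra h
    push_neg at h
    have h0 : specNorm ((J xs)⁻¹) = 0 := le_antisymm h (specNorm_nonneg _)
    have h1 := specNorm_mul_le ((J xs)⁻¹) (J xs)
    rw [hone, h0, zero_mul] at h1
    linarith
  have hμpos : 0 < μ := by rw [hμ]; positivity
  have hspecval : specNorm ((J xs)⁻¹) = 1 / μ := by rw [hμ, one_div_one_div]
  have hBu : ∀ k, B k *ᵥ ((B k)⁻¹ *ᵥ F (x k)) = F (x k) := by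
    intro k
    rw [Matrix.mulVec_mulVec, Matrix.mul_nonsing_inv _ (hBk k), Matrix.one_mulVec]
  -- step 1 : the raw linear-convergence inequality
  have hstep1 : ∀ k, (1 - frobNorm ((J xs)⁻¹ * (B k - J xs))) * vnorm (x (k + 1) - xs)
      ≤ (frobNorm ((J xs)⁻¹ * (B k - J xs)) + M * vnorm (x k - xs) / μ)
          * vnorm (x k - xs) := by
    intro k
    have hId : J xs *ᵥ (x (k + 1) - xs) =
        (B k - J xs) *ᵥ (x k - xs) - (F (x k) - J xs *ᵥ (x k - xs))
          - (B k - J xs) *ᵥ (x (k + 1) - xs) := by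
      rw [hx k]
      simp only [Matrix.mulVec_sub, Matrix.sub_mulVec, hBu k]
      abel
    have hId2 : x (k + 1) - xs =
        ((J xs)⁻¹ * (B k - J xs)) *ᵥ (x k - xs)
          - (J xs)⁻¹ *ᵥ (F (x k) - J xs *ᵥ (x k - xs))
          - ((J xs)⁻¹ * (B k - J xs)) *ᵥ (x (k + 1) - xs) := by
      have h0 : x (k + 1) - xs = (J xs)⁻¹ *ᵥ (J xs *ᵥ (x (k + 1) - xs)) := by
        rw [Matrix.mulVec_mulVec, hAJ, Matrix.one_mulVec]
      conv_lhs => rw [h0, hId]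
      rw [Matrix.mulVec_sub, Matrix.mulVec_sub, Matrix.mulVec_mulVec, Matrix.mulVec_mulVec]
    have hWb : vnorm (F (x k) - J xs *ᵥ (x k - xs))
        ≤ M * vnorm (x k - xs) * vnorm (x k - xs) := by
      have h := broyden_mvt F J hF xs M hM hLip xs (x k)
      rw [hxs, sub_zero, sub_self, vnorm_zero, max_eq_right (vnorm_nonneg _)] at h
      exact h
    have e1 := vnorm_mulVec_le_frob ((J xs)⁻¹ * (B k - J xs)) (x k - xs)
    have e3 := vnorm_mulVec_le_frob ((J xs)⁻¹ * (B k - J xs)) (x (k + 1) - xs)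
    have e2 : vnorm ((J xs)⁻¹ *ᵥ (F (x k) - J xs *ᵥ (x k - xs)))
        ≤ 1 / μ * (M * vnorm (x k - xs) * vnorm (x k - xs)) := by
      calc vnorm ((J xs)⁻¹ *ᵥ (F (x k) - J xs *ᵥ (x k - xs)))
          ≤ specNorm ((J xs)⁻¹) * vnorm (F (x k) - J xs *ᵥ (x k - xs)) :=
            vnorm_mulVec_le _ _
      _ = 1 / μ * vnorm (F (x k) - J xs *ᵥ (x k - xs)) := by rw [hspecval]
      _ ≤ 1 / μ * (M * vnorm (x k - xs) * vnorm (x k - xs)) :=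
            mul_le_mul_of_nonneg_left hWb (by positivity)
    have h1 : vnorm (x (k + 1) - xs) ≤
        frobNorm ((J xs)⁻¹ * (B k - J xs)) * vnorm (x k - xs)
        + 1 / μ * (M * vnorm (x k - xs) * vnorm (x k - xs))
        + frobNorm ((J xs)⁻¹ * (B k - J xs)) * vnorm (x (k + 1) - xs) := by
      conv_lhs => rw [hId2]
      have := vnorm_sub_sub_le (((J xs)⁻¹ * (B k - J xs)) *ᵥ (x k - xs))
        ((J xs)⁻¹ *ᵥ (F (x k) - J xs *ᵥ (x k - xs)))
        (((J xs)⁻¹ * (B k - J xs)) *ᵥ (x (k + 1) - xs))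
      linarith [e1, e2, e3]
    have heq : 1 / μ * (M * vnorm (x k - xs) * vnorm (x k - xs))
        = M * vnorm (x k - xs) / μ * vnorm (x k - xs) := by ring
    rw [heq] at h1
    linarith [h1]
  -- step 2 : the bounded-deterioration inequality
  have hstep2 : ∀ k, vnorm (x (k + 1) - xs) ≤ vnorm (x k - xs) →
      frobNorm ((J xs)⁻¹ * (B (k + 1) - J xs))
        ≤ frobNorm ((J xs)⁻¹ * (B k - J xs)) + M * vnorm (x k - xs) / μ := by
    intro k hdec
    obtain ⟨u, hu⟩ : ∃ u, u = x (k + 1) - x k := ⟨_, rfl⟩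
    have hu0 : u ≠ 0 := by
      intro h
      apply hFk k
      have h2 : (B k)⁻¹ *ᵥ F (x k) = 0 := by
        have h3 : x (k + 1) - x k = -((B k)⁻¹ *ᵥ F (x k)) := by rw [hx k]; abel
        rw [h3] at hu
        rw [hu] at h
        simpa using h.symm
      have h4 := congrArg (fun v => B k *ᵥ v) h2
      simpa [hBu k, Matrix.mulVec_zero] using h4
    have hud : 0 < u ⬝ᵥ u := dot_self_pos hu0
    have hvu : 0 < vnorm u := vnorm_pos hu0
    have hyw : F (x (k + 1)) - F (x k) - B k *ᵥ u
        = (F (x (k + 1)) - F (x k) - J xs *ᵥ u) - (B k - J xs) *ᵥ u := by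
      rw [Matrix.sub_mulVec]; abel
    have hBid : B (k + 1) - J xs = (B k - J xs)
        + ((u ⬝ᵥ u)⁻¹ • vecMulVec (F (x (k + 1)) - F (x k) - J xs *ᵥ u) u
          - (u ⬝ᵥ u)⁻¹ • vecMulVec ((B k - J xs) *ᵥ u) u) := by
      have h0 := hB k
      rw [← hu] at h0
      rw [h0, hyw, vecMulVec_sub, smul_sub]
      abel
    have hEid : (J xs)⁻¹ * (B (k + 1) - J xs)
        = (((J xs)⁻¹ * (B k - J xs))
            - (u ⬝ᵥ u)⁻¹ • vecMulVec ((((J xs)⁻¹ * (B k - J xs))) *ᵥ u) u)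
          + (u ⬝ᵥ u)⁻¹ • vecMulVec ((J xs)⁻¹ *ᵥ (F (x (k + 1)) - F (x k) - J xs *ᵥ u)) u := by
      have h1 : (J xs)⁻¹ * ((u ⬝ᵥ u)⁻¹ • vecMulVec (F (x (k + 1)) - F (x k) - J xs *ᵥ u) u)
          = (u ⬝ᵥ u)⁻¹ • vecMulVec ((J xs)⁻¹ *ᵥ (F (x (k + 1)) - F (x k) - J xs *ᵥ u)) u := by
        rw [Matrix.mul_smul, mul_vecMulVec]
      have h2 : (J xs)⁻¹ * ((u ⬝ᵥ u)⁻¹ • vecMulVec ((B k - J xs) *ᵥ u) u)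
          = (u ⬝ᵥ u)⁻¹ • vecMulVec (((J xs)⁻¹ * (B k - J xs)) *ᵥ u) u := by
        rw [Matrix.mul_smul, mul_vecMulVec, Matrix.mulVec_mulVec]
      have h3 : (J xs)⁻¹ * ((u ⬝ᵥ u)⁻¹ • vecMulVec (F (x (k + 1)) - F (x k) - J xs *ᵥ u) u
            - (u ⬝ᵥ u)⁻¹ • vecMulVec ((B k - J xs) *ᵥ u) u)
          = (u ⬝ᵥ u)⁻¹ • vecMulVec ((J xs)⁻¹ *ᵥ (F (x (k + 1)) - F (x k) - J xs *ᵥ u)) u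
            - (u ⬝ᵥ u)⁻¹ • vecMulVec (((J xs)⁻¹ * (B k - J xs)) *ᵥ u) u := by
        rw [Matrix.mul_sub, h1, h2]
      rw [hBid, Matrix.mul_add, h3]
      abel
    have hw : vnorm (F (x (k + 1)) - F (x k) - J xs *ᵥ u)
        ≤ M * vnorm (x k - xs) * vnorm u := by
      have h := broyden_mvt F J hF xs M hM hLip (x k) (x (k + 1))
      rw [← hu, max_eq_left hdec] at h
      exact h
    have hterm2 : frobNorm ((u ⬝ᵥ u)⁻¹ •
          vecMulVec ((J xs)⁻¹ *ᵥ (F (x (k + 1)) - F (x k) - J xs *ᵥ u)) u)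
        ≤ M * vnorm (x k - xs) / μ := by
      rw [frobNorm_smul, frobNorm_vecMulVec, abs_of_pos (inv_pos.mpr hud), vnorm_dot]
      have hA : vnorm ((J xs)⁻¹ *ᵥ (F (x (k + 1)) - F (x k) - J xs *ᵥ u))
          ≤ 1 / μ * (M * vnorm (x k - xs) * vnorm u) := by
        calc vnorm ((J xs)⁻¹ *ᵥ (F (x (k + 1)) - F (x k) - J xs *ᵥ u))
            ≤ specNorm ((J xs)⁻¹) * vnorm (F (x (k + 1)) - F (x k) - J xs *ᵥ u) :=
              vnorm_mulVec_le _ _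
        _ = 1 / μ * vnorm (F (x (k + 1)) - F (x k) - J xs *ᵥ u) := by rw [hspecval]
        _ ≤ 1 / μ * (M * vnorm (x k - xs) * vnorm u) :=
              mul_le_mul_of_nonneg_left hw (by positivity)
      calc (vnorm u ^ 2)⁻¹
            * (vnorm ((J xs)⁻¹ *ᵥ (F (x (k + 1)) - F (x k) - J xs *ᵥ u)) * vnorm u)
          ≤ (vnorm u ^ 2)⁻¹ * ((1 / μ * (M * vnorm (x k - xs) * vnorm u)) * vnorm u) := by
            apply mul_le_mul_of_nonneg_left _ (by positivity)
            exact mul_le_mul_of_nonneg_right hA (vnorm_nonneg _)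
      _ = M * vnorm (x k - xs) / μ := by
            field_simp
    calc frobNorm ((J xs)⁻¹ * (B (k + 1) - J xs))
        = frobNorm ((((J xs)⁻¹ * (B k - J xs))
            - (u ⬝ᵥ u)⁻¹ • vecMulVec ((((J xs)⁻¹ * (B k - J xs))) *ᵥ u) u)
          + (u ⬝ᵥ u)⁻¹ • vecMulVec ((J xs)⁻¹ *ᵥ (F (x (k + 1)) - F (x k) - J xs *ᵥ u)) u) := by
          rw [hEid]
    _ ≤ frobNorm (((J xs)⁻¹ * (B k - J xs))
            - (u ⬝ᵥ u)⁻¹ • vecMulVec ((((J xs)⁻¹ * (B k - J xs))) *ᵥ u) u)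
        + frobNorm ((u ⬝ᵥ u)⁻¹ •
            vecMulVec ((J xs)⁻¹ *ᵥ (F (x (k + 1)) - F (x k) - J xs *ᵥ u)) u) :=
          frobNorm_add_le _ _
    _ ≤ frobNorm ((J xs)⁻¹ * (B k - J xs)) + M * vnorm (x k - xs) / μ :=
          add_le_add (frob_proj_le _ _ hu0) hterm2
  exact broyden_induction q (frobNorm ((J xs)⁻¹ * (B 0 - J xs))) M μ (vnorm (x 0 - xs))
    (fun k => frobNorm ((J xs)⁻¹ * (B k - J xs))) (fun k => vnorm (x k - xs))
    hq0 hq1 hM hμpos rfl rfl (fun k => frobNorm_nonneg _) (fun k => vnorm_nonneg _)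
    hσ0 hr0 hstep1 hstep2
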